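/- Let L be an associative unital 𝔽₂-algebra, k ≥ 1, and u₀, u₁, …, u_k elements of L such that uᵢuⱼ = uⱼuᵢ whenever |i − j| ≥ 2. Set v = u_k u_{k−1} ⋯ u₁, and let I be the two-sided ideal of L generated by the elements u_{i−1}u_i u_{i−1} + u_i u_{i−1} u_i for 1 ≤ i ≤ k. Then v u₀ v ∈ I + L·u₀, i.e. there exist x ∈ I and w ∈ L with v u₀ v = x + w u₀. -/
import Mathlib


/-- Let `L` be an associative unital `𝔽₂`-algebra (a ring in which
`1 + 1 = 0`), `k ≥ 1`, and `u₀, …, u_k` elements of `L` such that `uᵢ` and `uⱼ` commute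
whenever `|i − j| ≥ 2`.  Let `v = u_k u_{k−1} ⋯ u₁` and let `I` be the two-sided ideal
generated by the elements `u_{i−1} u_i u_{i−1} + u_i u_{i−1} u_i` for `1 ≤ i ≤ k`.
Then `v u₀ v ∈ I + L u₀`. -/
theorem braid_product_mem_ideal_add_left_multiples
    {L : Type*} [Ring L] (hchar : (1 : L) + 1 = 0)
    (k : ℕ) (hk : 1 ≤ k) (u : ℕ → L)
    (hcomm : ∀ i j, i ≤ k → j ≤ k → 2 ≤ max i j - min i j → u i * u j = u j * u i) :
    ∃ (x w : L),
      x ∈ TwoSidedIdeal.span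
        {y : L | ∃ i, 1 ≤ i ∧ i ≤ k ∧ y = u (i - 1) * u i * u (i - 1) + u i * u (i - 1) * u i} ∧
      ((List.range k).map (fun i => u (k - i))).prod * u 0 *
          ((List.range k).map (fun i => u (k - i))).prod = x + w * u 0 := by
  have htwo : ∀ a : L, a + a = 0 := by
    intro a
    have h : (1 + 1 : L) * a = 0 := by rw [hchar, zero_mul]
    rwa [add_mul, one_mul] at h
  set I := TwoSidedIdeal.span
      {y : L | ∃ i, 1 ≤ i ∧ i ≤ k ∧ y = u (i - 1) * u i * u (i - 1) + u i * u (i - 1) * u i}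
    with hI
  set P : ℕ → L := fun n => ((List.range n).map (fun i => u (n - i))).prod with hP
  have hP0 : P 0 = 1 := by simp [hP]
  have hPsucc : ∀ n, P (n + 1) = u (n + 1) * P n := by
    intro n
    simp only [hP, List.range_succ_eq_map, List.map_cons, List.prod_cons, List.map_map,
      Nat.sub_zero]
    congr 1
    refine congrArg _ (List.map_congr_left fun i _ => ?_)
    simp [Function.comp, Nat.succ_sub_succ]
  have hcom : ∀ n t, t + 2 ≤ n → n ≤ k → u n * (P t * u 0) = (P t * u 0) * u n := by
    intro n t
    induction t with
    | zero =>
      intro h hn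
      have h0 : u n * u 0 = u 0 * u n := by
        refine hcomm n 0 hn (by omega) ?_
        rw [Nat.max_eq_left (by omega), Nat.min_eq_right (by omega)]
        omega
      rw [hP0]
      simp only [one_mul]
      exact h0
    | succ s ih =>
      intro h hn
      have h1 : u n * u (s + 1) = u (s + 1) * u n := by
        refine hcomm n (s + 1) hn (by omega) ?_
        rw [Nat.max_eq_left (by omega), Nat.min_eq_right (by omega)]
        omega
      have h2 := ih (by omega) hn
      rw [hPsucc s]
      calc u n * (u (s + 1) * P s * u 0)
          = u n * u (s + 1) * (P s * u 0) := by noncomm_ring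
        _ = u (s + 1) * (u n * (P s * u 0)) := by rw [h1]; noncomm_ring
        _ = u (s + 1) * (P s * u 0 * u n) := by rw [h2]
        _ = u (s + 1) * P s * u 0 * u n := by noncomm_ring
  have main : ∀ m, 1 ≤ m → m ≤ k → ∃ x w, x ∈ I ∧ P m * u 0 * P m = x + w * u 0 := by
    intro m
    induction m with
    | zero => omega
    | succ t ih =>
      intro _ hmk
      match t, ih with
      | 0, _ =>
        refine ⟨u 0 * u 1 * u 0 + u 1 * u 0 * u 1, u 0 * u 1, ?_, ?_⟩
        · exact TwoSidedIdeal.subset_span ⟨1, le_refl 1, hmk, rfl⟩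
        · rw [hPsucc 0, hP0, mul_one]
          rw [show (u 0 * u 1 * u 0 + u 1 * u 0 * u 1) + u 0 * u 1 * u 0
              = u 1 * u 0 * u 1 + (u 0 * u 1 * u 0 + u 0 * u 1 * u 0) by noncomm_ring,
            htwo, add_zero]
      | s + 1, ih =>
        have hss : s + 1 + 1 = s + 2 := rfl
        rw [hss] at hmk ⊢
        obtain ⟨x, w, hx, hsum⟩ := ih (by omega) (by omega)
        set g : L := u (s + 1) * u (s + 2) * u (s + 1) + u (s + 2) * u (s + 1) * u (s + 2)
          with hg
        have hgI : g ∈ I := by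
          have hidx : s + 2 - 1 = s + 1 := by omega
          exact TwoSidedIdeal.subset_span ⟨s + 2, by omega, hmk, by rw [hg, hidx]⟩
        set A : L := (P s * u 0) * P (s + 1) with hA
        have hc := hcom (s + 2) s (by omega) hmk
        have step1 : P (s + 2) * u 0 * P (s + 2) = (u (s + 2) * u (s + 1) * u (s + 2)) * A := by
          rw [hPsucc (s + 1), hPsucc s, hA]
          have e1 : u (s + 2) * (u (s + 1) * P s) * u 0 * (u (s + 2) * (u (s + 1) * P s))
              = u (s + 2) * u (s + 1) * ((P s * u 0) * u (s + 2)) * (u (s + 1) * P s) := by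
            noncomm_ring
          rw [e1, ← hc, ← hPsucc s]
          noncomm_ring
        have hb : u (s + 2) * u (s + 1) * u (s + 2)
            = g + u (s + 1) * u (s + 2) * u (s + 1) := by
          rw [hg, add_right_comm, htwo, zero_add]
        have hbA : (u (s + 1) * u (s + 2) * u (s + 1)) * A
            = u (s + 1) * u (s + 2) * (P (s + 1) * u 0 * P (s + 1)) := by
          rw [hA, hPsucc s]; noncomm_ring
        refine ⟨g * A + u (s + 1) * u (s + 2) * x, u (s + 1) * u (s + 2) * w, ?_, ?_⟩
        · exact I.add_mem (I.mul_mem_right _ _ hgI) (I.mul_mem_left _ _ hx)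
        · rw [step1, hb, add_mul, hbA, hsum]
          noncomm_ring
  obtain ⟨x, w, hx, hsum⟩ := main k hk le_rfl
  exact ⟨x, w, hx, hsum⟩
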